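/- Let R(x,t₂) = R₀ + ℏ R₁ + ℏ² R₂ with R₀ = x⁵ + 3t₂x³ − αx² + (3(9072t₂² + 8000αβ − 34560t₂β² − 51975β⁴ − 15120δ)/12320)x − 9(9072t₂²β + 1840αβ² − 6840t₂β³ − 31185β⁵ − 221760γ² − 15120βδ)/24640, R₁ = 18γ/(2x − 3β), R₂ = 3/(2x − 3β)², and B(x,t₂) = 2/(2x − 3β). If (α, β, γ, δ) are differentiable functions of t₂ satisfying ℏα' = −3βℏ/2, ℏβ' = −12γ, ℏγ' = −9(336t₂² − 160αβ + 1800t₂β² + 1925β⁴ − 560δ)/12320, ℏδ' = (103680t₂βγ − 12000αγ + 311850β³γ + 728t₂ℏ − 4665β²ℏ)/1890, then 2 ∂R/∂t₂ + ℏ² ∂³B/∂x³ − 4R ∂B/∂x − 2B ∂R/∂x = 0 identically in x (on the domain x ≠ 3β/2). -/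

import Mathlib

/-- The potential `R(x,t₂)` of the singularity reduction of the Garnier system of
type 9/2. -/
noncomputable def RGar92 (ℏ : ℂ) (α β γ δ : ℂ → ℂ) (t x : ℂ) : ℂ :=
  (x ^ 5 + 3 * t * x ^ 3 - α t * x ^ 2
    + (3 * (9072 * t ^ 2 + 8000 * α t * β t - 34560 * t * (β t) ^ 2
        - 51975 * (β t) ^ 4 - 15120 * δ t) / 12320) * x
    - 9 * (9072 * t ^ 2 * β t + 1840 * α t * (β t) ^ 2 - 6840 * t * (β t) ^ 3
        - 31185 * (β t) ^ 5 - 221760 * (γ t) ^ 2 - 15120 * β t * δ t) / 24640)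
  + ℏ * (18 * γ t / (2 * x - 3 * β t))
  + ℏ ^ 2 * (3 / (2 * x - 3 * β t) ^ 2)

/-- The deformation coefficient `B(x,t₂) = 2/(2x−3β)`. -/
noncomputable def BGar92 (β : ℂ → ℂ) (t x : ℂ) : ℂ := 2 / (2 * x - 3 * β t)

set_option maxHeartbeats 1000000 in
theorem RfracAux (u h C A c1 c2 n : ℂ) (hu : u ≠ 0) (hC : C ≠ 0)
    (key : A * C * u ^ 2 + h * c1 * C * u + h ^ 2 * c2 * C = n) :
    A + h * (c1 / u) + h ^ 2 * (c2 / u ^ 2) = n / (C * u ^ 2) := by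
  have hD : C * u ^ 2 ≠ 0 := mul_ne_zero hC (pow_ne_zero 2 hu)
  have e0 : A = A * C * u ^ 2 / (C * u ^ 2) := by rw [eq_div_iff hD]; ring
  have e1 : h * (c1 / u) = h * c1 * C * u / (C * u ^ 2) := by
    rw [mul_div_assoc' h c1 u, div_eq_div_iff hu hD]; ring
  have e2 : h ^ 2 * (c2 / u ^ 2) = h ^ 2 * c2 * C / (C * u ^ 2) := by
    rw [mul_div_assoc' (h ^ 2) c2 (u ^ 2), div_eq_div_iff (pow_ne_zero 2 hu) hD]; ring
  rw [e0, e1, e2, ← add_div, ← add_div, key]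

theorem derivFracAux (u h C A f1 f2 n : ℂ) (hu : u ≠ 0) (hC : C ≠ 0)
    (key : A * C * u ^ 4 + h * f1 * C * u ^ 2 + h ^ 2 * f2 * C = n * u) :
    A + h * (f1 / u ^ 2) + h ^ 2 * (f2 / u ^ 4) = n / (C * u ^ 3) := by
  have hD : C * u ^ 4 ≠ 0 := mul_ne_zero hC (pow_ne_zero 4 hu)
  have hD3 : C * u ^ 3 ≠ 0 := mul_ne_zero hC (pow_ne_zero 3 hu)
  have eR : n / (C * u ^ 3) = n * u / (C * u ^ 4) := by
    rw [div_eq_div_iff hD3 hD]; ring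
  have e1 : h * (f1 / u ^ 2) = h * f1 * C * u ^ 2 / (C * u ^ 4) := by
    rw [mul_div_assoc' h f1 (u ^ 2), div_eq_div_iff (pow_ne_zero 2 hu) hD]; ring
  have e2 : h ^ 2 * (f2 / u ^ 4) = h ^ 2 * f2 * C / (C * u ^ 4) := by
    rw [mul_div_assoc' (h ^ 2) f2 (u ^ 4), div_eq_div_iff (pow_ne_zero 4 hu) hD]; ring
  have e0 : A = A * C * u ^ 4 / (C * u ^ 4) := by rw [eq_div_iff hD]; ring
  rw [eR, e0, e1, e2, ← add_div, ← add_div, key]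

theorem derivFracAux2 (u h C A f1 f2 n : ℂ) (hu : u ≠ 0) (hh : h ≠ 0) (hC : C ≠ 0)
    (key : h * (A * C * u ^ 4 + h * f1 * C * u ^ 2 + h ^ 2 * f2 * C) = n * u) :
    A + h * (f1 / u ^ 2) + h ^ 2 * (f2 / u ^ 4) = n / (C * h * u ^ 3) := by
  have hD : C * h * u ^ 4 ≠ 0 := mul_ne_zero (mul_ne_zero hC hh) (pow_ne_zero 4 hu)
  have hD3 : C * h * u ^ 3 ≠ 0 := mul_ne_zero (mul_ne_zero hC hh) (pow_ne_zero 3 hu)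
  have eR : n / (C * h * u ^ 3) = n * u / (C * h * u ^ 4) := by
    rw [div_eq_div_iff hD3 hD]; ring
  have e1 : h * (f1 / u ^ 2) = h ^ 2 * f1 * C * u ^ 2 / (C * h * u ^ 4) := by
    rw [mul_div_assoc' h f1 (u ^ 2), div_eq_div_iff (pow_ne_zero 2 hu) hD]; ring
  have e2 : h ^ 2 * (f2 / u ^ 4) = h ^ 3 * f2 * C / (C * h * u ^ 4) := by
    rw [mul_div_assoc' (h ^ 2) f2 (u ^ 4), div_eq_div_iff (pow_ne_zero 4 hu) hD]; ring
  have e0 : A = h * A * C * u ^ 4 / (C * h * u ^ 4) := by rw [eq_div_iff hD]; ring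
  rw [eR, e0, e1, e2, ← add_div, ← add_div,
    show h * A * C * u ^ 4 + h ^ 2 * f1 * C * u ^ 2 + h ^ 3 * f2 * C = n * u from by
      linear_combination key]

theorem fracEq (a b c d : ℂ) (hb : b ≠ 0) (hd : d ≠ 0) (h : a * d = c * b) :
    a / b = c / d := (div_eq_div_iff hb hd).mpr h

theorem combineAux (u h C n1 n2 n3 : ℂ) (hu : u ≠ 0) (hh : h ≠ 0) (hC : C ≠ 0)
    (key : 2 * n1 * u - 96 * h ^ 3 * C + 16 * n2 * h - 4 * n3 * h = 0) :
    2 * (n1 / (C * h * u ^ 3)) + h ^ 2 * (-96 / u ^ 4)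
      - 4 * (n2 / (C * u ^ 2)) * (-4 / u ^ 2)
      - 2 * (2 / u) * (n3 / (C * u ^ 3)) = 0 := by
  have hD : C * h * u ^ 4 ≠ 0 := mul_ne_zero (mul_ne_zero hC hh) (pow_ne_zero 4 hu)
  have h1 : C * h * u ^ 3 ≠ 0 := mul_ne_zero (mul_ne_zero hC hh) (pow_ne_zero 3 hu)
  have h2 : u ^ 4 ≠ 0 := pow_ne_zero 4 hu
  have h3 : C * u ^ 2 * u ^ 2 ≠ 0 :=
    mul_ne_zero (mul_ne_zero hC (pow_ne_zero 2 hu)) (pow_ne_zero 2 hu)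
  have h4 : u * (C * u ^ 3) ≠ 0 := mul_ne_zero hu (mul_ne_zero hC (pow_ne_zero 3 hu))
  have e1 : 2 * (n1 / (C * h * u ^ 3)) = 2 * n1 * u / (C * h * u ^ 4) := by
    rw [mul_div_assoc']; exact fracEq _ _ _ _ h1 hD (by ring)
  have e2 : h ^ 2 * (-96 / u ^ 4) = -(96 * h ^ 3 * C) / (C * h * u ^ 4) := by
    rw [mul_div_assoc']; exact fracEq _ _ _ _ h2 hD (by ring)
  have e3 : 4 * (n2 / (C * u ^ 2)) * (-4 / u ^ 2) = -(16 * n2 * h) / (C * h * u ^ 4) := by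
    rw [mul_div_assoc' 4 n2 (C * u ^ 2), div_mul_div_comm]
    exact fracEq _ _ _ _ h3 hD (by ring)
  have e4 : 2 * (2 / u) * (n3 / (C * u ^ 3)) = 4 * n3 * h / (C * h * u ^ 4) := by
    rw [mul_div_assoc' 2 2 u, div_mul_div_comm]
    exact fracEq _ _ _ _ h4 hD (by ring)
  rw [e1, e2, e3, e4, ← add_div, ← sub_div, ← sub_div,
    div_eq_zero_iff]
  left; linear_combination key

set_option maxHeartbeats 4000000 in
/-- If `(α,β,γ,δ)` satisfy the stated ODE system in `t₂`, then the pair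
`(R, B) = (RGar92, BGar92)` satisfies the isomonodromy (compatibility) identity
`2 ∂R/∂t₂ + ℏ² ∂³B/∂x³ − 4R ∂B/∂x − 2B ∂R/∂x = 0` for `x ≠ 3β/2`. -/
theorem stmt8 (ℏ : ℂ) (hℏ : ℏ ≠ 0) (α β γ δ : ℂ → ℂ)
    (hα : Differentiable ℂ α) (hβ : Differentiable ℂ β)
    (hγ : Differentiable ℂ γ) (hδ : Differentiable ℂ δ)
    (h1 : ∀ t, ℏ * deriv α t = -3 * β t * ℏ / 2)
    (h2 : ∀ t, ℏ * deriv β t = -12 * γ t)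
    (h3 : ∀ t, ℏ * deriv γ t =
      -9 * (336 * t ^ 2 - 160 * α t * β t + 1800 * t * (β t) ^ 2
        + 1925 * (β t) ^ 4 - 560 * δ t) / 12320)
    (h4 : ∀ t, ℏ * deriv δ t =
      (103680 * t * β t * γ t - 12000 * α t * γ t + 311850 * (β t) ^ 3 * γ t
        + 728 * t * ℏ - 4665 * (β t) ^ 2 * ℏ) / 1890) :
    ∀ t x : ℂ, x ≠ 3 * β t / 2 →
      2 * deriv (fun s => RGar92 ℏ α β γ δ s x) t
        + ℏ ^ 2 * deriv (fun y =>
            deriv (fun y' => deriv (fun y'' => BGar92 β t y'') y') y) x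
        - 4 * RGar92 ℏ α β γ δ t x * deriv (fun y => BGar92 β t y) x
        - 2 * BGar92 β t x * deriv (fun y => RGar92 ℏ α β γ δ t y) x = 0 := by
  intro t x hx
  have hu : 2 * x - 3 * β t ≠ 0 := by
    intro h; exact hx (by linear_combination h / 2)
  have ha : HasDerivAt α (deriv α t) t := (hα t).hasDerivAt
  have hb : HasDerivAt β (deriv β t) t := (hβ t).hasDerivAt
  have hc : HasDerivAt γ (deriv γ t) t := (hγ t).hasDerivAt
  have hd : HasDerivAt δ (deriv δ t) t := (hδ t).hasDerivAt
  have ha' : deriv α t = -3 * β t / 2 := by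
    apply mul_left_cancel₀ hℏ; linear_combination h1 t
  have hb' : deriv β t = -12 * γ t / ℏ := by
    rw [eq_div_iff hℏ]; linear_combination h2 t
  have hc' : deriv γ t = -9 * (336 * t ^ 2 - 160 * α t * β t + 1800 * t * (β t) ^ 2
      + 1925 * (β t) ^ 4 - 560 * δ t) / 12320 / ℏ := by
    rw [eq_div_iff hℏ]; linear_combination h3 t
  have hd' : deriv δ t = (103680 * t * β t * γ t - 12000 * α t * γ t
      + 311850 * (β t) ^ 3 * γ t + 728 * t * ℏ - 4665 * (β t) ^ 2 * ℏ) / 1890 / ℏ := by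
    rw [eq_div_iff hℏ]; linear_combination h4 t
  -- derivative of the denominator in x, at any point
  have hden : ∀ y : ℂ, HasDerivAt (fun z : ℂ => 2 * z - 3 * β t) 2 y := fun y => by
    simpa using ((hasDerivAt_id y).const_mul (2:ℂ)).sub_const (3 * β t)
  -- openness of the domain
  have hcont : Continuous fun y : ℂ => 2 * y - 3 * β t := by continuity
  have hopen : IsOpen {y : ℂ | 2 * y - 3 * β t ≠ 0} :=
    isOpen_compl_singleton.preimage hcont
  -- first x-derivative of B
  have hB1 : ∀ y : ℂ, 2 * y - 3 * β t ≠ 0 →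
      deriv (fun z => BGar92 β t z) y = -4 / (2 * y - 3 * β t) ^ 2 := by
    intro y h
    have H : HasDerivAt (fun z => BGar92 β t z) _ y :=
      (hasDerivAt_const y (2:ℂ)).div (hden y) h
    rw [H.deriv]; field_simp; ring
  -- second x-derivative of B
  have hB2 : ∀ y : ℂ, 2 * y - 3 * β t ≠ 0 →
      deriv (fun z => deriv (fun w => BGar92 β t w) z) y = 16 / (2 * y - 3 * β t) ^ 3 := by
    intro y h
    have hev : (fun z => deriv (fun w => BGar92 β t w) z)
        =ᶠ[nhds y] fun z => -4 / (2 * z - 3 * β t) ^ 2 := by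
      filter_upwards [hopen.mem_nhds h] with z hz using hB1 z hz
    rw [hev.deriv_eq]
    have H : HasDerivAt (fun z : ℂ => -4 / (2 * z - 3 * β t) ^ 2) _ y :=
      (hasDerivAt_const y (-4:ℂ)).div ((hden y).pow 2) (pow_ne_zero 2 h)
    rw [H.deriv]; field_simp; ring
  -- third x-derivative of B
  have hB3 : deriv (fun y =>
      deriv (fun y' => deriv (fun y'' => BGar92 β t y'') y') y) x
      = -96 / (2 * x - 3 * β t) ^ 4 := by
    have hev : (fun y => deriv (fun y' => deriv (fun y'' => BGar92 β t y'') y') y)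
        =ᶠ[nhds x] fun y => 16 / (2 * y - 3 * β t) ^ 3 := by
      filter_upwards [hopen.mem_nhds hu] with z hz using hB2 z hz
    rw [hev.deriv_eq]
    have H : HasDerivAt (fun z : ℂ => 16 / (2 * z - 3 * β t) ^ 3) _ x :=
      (hasDerivAt_const x (16:ℂ)).div ((hden x).pow 3) (pow_ne_zero 3 hu)
    rw [H.deriv]; field_simp; ring
  -- x-derivative of R
  have hRx : HasDerivAt (fun y => RGar92 ℏ α β γ δ t y) _ x :=
    ((((((hasDerivAt_pow 5 x).add
        ((hasDerivAt_pow 3 x).const_mul (3 * t))).sub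
        ((hasDerivAt_pow 2 x).const_mul (α t))).add
        ((hasDerivAt_id x).const_mul
          (3 * (9072 * t ^ 2 + 8000 * α t * β t - 34560 * t * (β t) ^ 2
            - 51975 * (β t) ^ 4 - 15120 * δ t) / 12320))).sub
        (hasDerivAt_const x _)).add
        (((hasDerivAt_const x (18 * γ t)).div (hden x) hu).const_mul ℏ)).add
        (((hasDerivAt_const x (3:ℂ)).div ((hden x).pow 2) (pow_ne_zero 2 hu)).const_mul (ℏ ^ 2))
  -- t-derivative of the denominator
  have hdent : HasDerivAt (fun s : ℂ => 2 * x - 3 * β s) (-(3 * deriv β t)) t :=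
    (hb.const_mul (3:ℂ)).const_sub (2 * x)
  -- t-derivative of R
  have hRt : HasDerivAt (fun s => RGar92 ℏ α β γ δ s x) _ t :=
    ((((((hasDerivAt_const t (x ^ 5)).add
        (((hasDerivAt_id t).const_mul (3:ℂ)).mul_const (x ^ 3))).sub
        (ha.mul_const (x ^ 2))).add
        (((((((hasDerivAt_pow 2 t).const_mul (9072:ℂ)).add
            ((ha.const_mul (8000:ℂ)).mul hb)).sub
            (((hasDerivAt_id t).const_mul (34560:ℂ)).mul (hb.pow 2))).sub
            ((hb.pow 4).const_mul (51975:ℂ))).sub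
            (hd.const_mul (15120:ℂ))).const_mul (3:ℂ) |>.div_const (12320:ℂ) |>.mul_const x)).sub
        ((((((((hasDerivAt_pow 2 t).const_mul (9072:ℂ)).mul hb).add
            ((ha.const_mul (1840:ℂ)).mul (hb.pow 2))).sub
            (((hasDerivAt_id t).const_mul (6840:ℂ)).mul (hb.pow 3))).sub
            ((hb.pow 5).const_mul (31185:ℂ))).sub
            ((hc.pow 2).const_mul (221760:ℂ))).sub
            ((hb.const_mul (15120:ℂ)).mul hd) |>.const_mul (9:ℂ) |>.div_const (24640:ℂ))).add
        (((hc.const_mul (18:ℂ)).div hdent hu).const_mul ℏ)).add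
        (((hasDerivAt_const t (3:ℂ)).div (hdent.pow 2) (pow_ne_zero 2 hu)).const_mul (ℏ ^ 2))
  have hC : (46569600:ℂ) ≠ 0 := by norm_num
  have hsq : ((2 * x - 3 * β t) ^ 2) ^ 2 = (2 * x - 3 * β t) ^ 4 := by ring
  have hR0 : RGar92 ℏ α β γ δ t x
      = (186278400*x ^ 7 - 558835200*x ^ 6*(β t) + 558835200*x ^ 5*t + 419126400*x ^ 5*(β t) ^ 2 - 1676505600*x ^ 4*t*(β t) - 186278400*x ^ 4*(α t) + 411505920*x ^ 3*t ^ 2 - 310262400*x ^ 3*t*(β t) ^ 2 + 921715200*x ^ 3*(α t)*(β t) - 2357586000*x ^ 3*(β t) ^ 4 - 685843200*x ^ 3*(δ t) - 1851776640*x ^ 2*t ^ 2*(β t) + 5168318400*x ^ 2*t*(β t) ^ 3 - 1632960000*x ^ 2*(α t)*(β t) ^ 2 + 9194585400*x ^ 2*(β t) ^ 5 + 3086294400*x ^ 2*(β t)*(δ t) + 15088550400*x ^ 2*(γ t) ^ 2 + 2777664960*x*t ^ 2*(β t) ^ 2 - 4923374400*x*t*(β t) ^ 4 + 1676505600*x*ℏ*(γ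 t) + 1192060800*x*(α t)*(β t) ^ 3 - 11670050700*x*(β t) ^ 6 - 4629441600*x*(β t) ^ 2*(δ t) - 45265651200*x*(β t)*(γ t) ^ 2 - 1388832480*t ^ 2*(β t) ^ 3 + 1047135600*t*(β t) ^ 5 + 139708800*ℏ ^ 2 - 2514758400*ℏ*(β t)*(γ t) - 281685600*(α t)*(β t) ^ 4 + 4774111650*(β t) ^ 7 + 2314720800*(β t) ^ 3*(δ t) + 33949238400*(β t) ^ 2*(γ t) ^ 2) / (46569600 * (2 * x - 3 * β t) ^ 2) := by
    simp only [RGar92]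
    exact RfracAux _ ℏ _ _ _ _ _ hu hC (by ring)
  have hRx4 : deriv (fun y => RGar92 ℏ α β γ δ t y) x
      = (1862784000*x ^ 7 - 8382528000*x ^ 6*(β t) + 3353011200*x ^ 5*t + 12573792000*x ^ 5*(β t) ^ 2 - 15088550400*x ^ 4*t*(β t) - 745113600*x ^ 4*(α t) - 6286896000*x ^ 4*(β t) ^ 3 + 823011840*x ^ 3*t ^ 2 + 19497542400*x ^ 3*t*(β t) ^ 2 + 4078771200*x ^ 3*(α t)*(β t) - 4715172000*x ^ 3*(β t) ^ 4 - 1371686400*x ^ 3*(δ t) - 3703553280*x ^ 2*t ^ 2*(β t) + 2792361600*x ^ 2*t*(β t) ^ 3 - 8295436800*x ^ 2*(α t)*(β t) ^ 2 + 21218274000*x ^ 2*(β t) ^ 5 + 6172588800*x ^ 2*(β t)*(δ t) + 5555329920*x*t ^ 2*(β t) ^ 2 - 21163161600*x*t*(β t) ^ 4 - 3353011200*x*ℏ*(γ t) + 7413638400*x*(α t)*(β t) ^ 3 - 31827411000*x*(β t) ^ 6 - 9258883200*x*(β t) ^ 2*(δ t) - 2777664960*t ^ 2*(β t) ^ 3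 + 10581580800*t*(β t) ^ 5 - 558835200*ℏ ^ 2 + 5029516800*ℏ*(β t)*(γ t) - 2449440000*(α t)*(β t) ^ 4 + 15913705500*(β t) ^ 7 + 4629441600*(β t) ^ 3*(δ t)) / (46569600 * (2 * x - 3 * β t) ^ 3) := by
    rw [hRx.deriv]; simp only [Pi.pow_apply, hsq]
    exact derivFracAux _ ℏ _ _ _ _ _ hu hC (by ring)
  have hRt4 : deriv (fun s => RGar92 ℏ α β γ δ s x) t
      = (1117670400*x ^ 6*ℏ - 4470681600*x ^ 5*ℏ*(β t) + 1117670400*x ^ 4*t*ℏ + 4191264000*x ^ 4*ℏ*(β t) ^ 2 - 6706022400*x ^ 3*t*ℏ*(β t) - 823011840*x ^ 2*t ^ 2*ℏ + 10679558400*x ^ 2*t*ℏ*(β t) ^ 2 + 391910400*x ^ 2*ℏ*(α t)*(β t) + 4715172000*x ^ 2*ℏ*(β t) ^ 4 + 1371686400*x ^ 2*ℏ*(δ t) + 2469035520*x*t ^ 2*ℏ*(β t) - 1861574400*x*t*ℏ*(β t) ^ 3 - 1175731200*x*ℏ*(α t)*(β t) ^ 2 - 8487309600*x*ℏ*(β t)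 ^ 5 - 4115059200*x*ℏ*(β t)*(δ t) - 60354201600*x*ℏ*(γ t) ^ 2 - 1851776640*t ^ 2*ℏ*(β t) ^ 2 - 4262025600*t*ℏ*(β t) ^ 4 - 10059033600*ℏ ^ 2*(γ t) + 881798400*ℏ*(α t)*(β t) ^ 3 + 2121827400*ℏ*(β t) ^ 6 + 3086294400*ℏ*(β t) ^ 2*(δ t) + 90531302400*ℏ*(β t)*(γ t) ^ 2) / (46569600 * ℏ * (2 * x - 3 * β t) ^ 3) := by
    rw [hRt.deriv]; simp only [Pi.pow_apply, hsq]
    refine derivFracAux2 _ ℏ _ _ _ _ _ hu hℏ hC ?_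
    simp only [id_eq]
    linear_combination ((-745113600*x ^ 6 + 5922201600*x ^ 5*(β t) - 19268928000*x ^ 4*(β t) ^ 2 + 32659200000*x ^ 3*(β t) ^ 3 - 30128112000*x ^ 2*(β t) ^ 4 + 14108774400*x*(β t) ^ 5 - 2535170400*(β t) ^ 6)) * h1 t + ((-12541132800*x ^ 5*t*(β t) + 1451520000*x ^ 5*(α t) - 37721376000*x ^ 5*(β t) ^ 3 - 2469035520*x ^ 4*t ^ 2 + 80831520000*x ^ 4*t*(β t) ^ 2 - 9710668800*x ^ 4*(α t)*(β t) + 268764804000*x ^ 4*(β t) ^ 4 + 4115059200*x ^ 4*(δ t) + 14814213120*x ^ 3*t ^ 2*(β t) - 202813632000*x ^ 3*t*(β t) ^ 3 + 25604812800*x ^ 3*(α t)*(β t) ^ 2 - 763857864000*x ^ 3*(β t) ^ 5 - 24690355200*x ^ 3*(β t)*(δ t) - 33331979520*x ^ 2*t ^ 2*(β t) ^ 2 + 244699056000*x ^ 2*t*(β t) ^ 4 + 10059033600*x ^ 2*ℏ*(γ t) - 33116428800*x ^ 2*(α t)*(β t) ^ 3 + 1082131974000*x ^ 2*(β t) ^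 6 + 55553299200*x ^ 2*(β t) ^ 2*(δ t) + 33331979520*x*t ^ 2*(β t) ^ 3 - 138883248000*x*t*(β t) ^ 5 + 1676505600*x*ℏ ^ 2 - 30177100800*x*ℏ*(β t)*(γ t) + 20869228800*x*(α t)*(β t) ^ 4 - 763857864000*x*(β t) ^ 7 - 55553299200*x*(β t) ^ 3*(δ t) - 12499492320*t ^ 2*(β t) ^ 4 + 28272661200*t*(β t) ^ 6 - 2514758400*ℏ ^ 2*(β t) + 22632825600*ℏ*(β t) ^ 2*(γ t) - 5070340800*(α t)*(β t) ^ 5 + 214835024250*(β t) ^ 8 + 20832487200*(β t) ^ 4*(δ t))) * h2 t + ((120708403200*x ^ 4*(γ t) + 6706022400*x ^ 3*ℏ - 724250419200*x ^ 3*(β t)*(γ t) - 30177100800*x ^ 2*ℏ*(β t) + 1629563443200*x ^ 2*(β t) ^ 2*(γ t) + 45265651200*x*ℏ*(β t) ^ 2 - 1629563443200*x*(β t) ^ 3*(γ t) - 22632825600*ℏ*(β t) ^ 3 + 611086291200*(β t) ^ 4*(γ t))) * h3 t + ((-2743372800*x ^ 5 + 20575296000*x ^ 4*(β t) - 61725888000*x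 ^ 3*(β t) ^ 2 + 92588832000*x ^ 2*(β t) ^ 3 - 69441624000*x*(β t) ^ 4 + 20832487200*(β t) ^ 5)) * h4 t
  have hB0 : BGar92 β t x = 2 / (2 * x - 3 * β t) := rfl
  rw [hRt4, hRx4, hR0, hB1 x hu, hB3, hB0]
  exact combineAux (2 * x - 3 * β t) ℏ 46569600 _ _ _ hu hℏ hC (by ring)
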